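/- If A is a positive semidefinite matrix and P an orthogonal projection with Tr(A) = Tr(P A), then A = P A P (equivalently, PA = AP = A). -/

import Mathlib

open Matrix ComplexOrder

lemma trace_conjTranspose_mul_self_eq_zero {d : ℕ} (C : Matrix (Fin d) (Fin d) ℂ)
    (h : (Cᴴ * C).trace = 0) : C = 0 := by
  have htr : (Cᴴ * C).trace = ((∑ j, ∑ i, Complex.normSq (C i j) : ℝ) : ℂ) := by
    simp [trace, mul_apply, conjTranspose_apply, Complex.normSq_eq_conj_mul_self]
  rw [htr, Complex.ofReal_eq_zero] at h
  have hz : ∀ j i, Complex.normSq (C i j) = 0 := by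
    intro j i
    have := (Finset.sum_eq_zero_iff_of_nonneg (fun j _ =>
      Finset.sum_nonneg fun i _ => Complex.normSq_nonneg _)).mp h j (Finset.mem_univ j)
    exact (Finset.sum_eq_zero_iff_of_nonneg (fun i _ => Complex.normSq_nonneg _)).mp this
      i (Finset.mem_univ i)
  ext i j
  simpa using Complex.normSq_eq_zero.mp (hz j i)

/-- If `A` is positive semidefinite and `P` is an orthogonal projection with
`Tr A = Tr (P A)`, then `A = P A P` (equivalently `P A = A P = A`). -/
theorem psd_trace_proj_eq (d : ℕ) (A P : Matrix (Fin d) (Fin d) ℂ)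
    (hA : A.PosSemidef) (hP : P.IsHermitian) (hP2 : P * P = P)
    (htr : A.trace = (P * A).trace) :
    A = P * A * P ∧ P * A = A ∧ A * P = A := by
  obtain ⟨B, hB⟩ : ∃ B : Matrix (Fin d) (Fin d) ℂ, A = Bᴴ * B := by
    open MatrixOrder in exact CStarAlgebra.nonneg_iff_eq_star_mul_self.mp hA.nonneg
  set Q : Matrix (Fin d) (Fin d) ℂ := 1 - P with hQ
  have hQ2 : Q * Q = Q := by
    simp only [hQ, sub_mul, mul_sub, one_mul, mul_one, hP2]
    abel
  have hQH : Qᴴ = Q := by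
    simp [hQ, conjTranspose_sub, hP.eq]
  have hCHC : (B * Q)ᴴ * (B * Q) = Q * A * Q := by
    rw [conjTranspose_mul, hQH, hB]; noncomm_ring
  have htr0 : ((B * Q)ᴴ * (B * Q)).trace = 0 := by
    rw [hCHC, trace_mul_comm, ← mul_assoc, hQ2, hQ, sub_mul, one_mul, trace_sub, htr]
    exact sub_self _
  have hBQ : B * Q = 0 := trace_conjTranspose_mul_self_eq_zero _ htr0
  have hAQ : A * Q = 0 := by
    rw [hB, mul_assoc, hBQ, mul_zero]
  have hAP : A * P = A := by
    have := hAQ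
    rw [hQ, mul_sub, mul_one, sub_eq_zero] at this
    exact this.symm
  have hPA : P * A = A := by
    have := congrArg conjTranspose hAP
    rwa [conjTranspose_mul, hP.eq, hA.isHermitian.eq] at this
  exact ⟨by rw [hPA, hAP], hPA, hAP⟩
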